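/- A firm's cumulative utility U_i(p^i) = Σ_{t=1}^T (D_t^i - p_t^i)(p_t^i - c_i), viewed as a function of its own price vector p^i ∈ ℝ^T with rivals' prices fixed and demands given by the linear recursion, is strictly concave in p^i. -/
import Mathlib


/-- Firm `i`'s demand path as a function of its own price vector `p : Fin T → ℝ`,
with rivals' total prices `s : ℕ → ℝ` held fixed:
`D_0 = D1`, `D_{t+1} = D_t - p_t + (p_t + s_t)/N` (for `t < T`). -/
noncomputable def ownDemandFin (N T : ℕ) (D1 : ℝ) (s : ℕ → ℝ) (p : Fin T → ℝ) : ℕ → ℝ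
  | 0 => D1
  | t + 1 =>
      let P : ℝ := if h : t < T then p ⟨t, h⟩ else 0
      ownDemandFin N T D1 s p t - P + (P + s t) / (N : ℝ)

/-- Extension of a price vector `p : Fin T → ℝ` to a sequence `ℕ → ℝ` (zero past `T`). -/
noncomputable def Qf (T : ℕ) (p : Fin T → ℝ) (i : ℕ) : ℝ :=
  if h : i < T then p ⟨i, h⟩ else 0

lemma demand_closed (N T : ℕ) (D1 : ℝ) (s : ℕ → ℝ) (p : Fin T → ℝ) (t : ℕ) :
    ownDemandFin N T D1 s p t
      = D1 + ∑ i ∈ Finset.range t, ((1/(N:ℝ) - 1) * Qf T p i + s i / N) := by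
  induction t with
  | zero => simp [ownDemandFin]
  | succ t ih =>
      rw [ownDemandFin, Finset.sum_range_succ, ih]
      simp only [Qf]; ring

lemma sq_sum_range (g : ℕ → ℝ) (n : ℕ) :
    (∑ j ∈ Finset.range n, g j)^2
      = ∑ j ∈ Finset.range n, (g j)^2
        + 2 * ∑ j ∈ Finset.range n, (g j * ∑ i ∈ Finset.range j, g i) := by
  induction n with
  | zero => simp
  | succ n ih =>
      rw [Finset.sum_range_succ, Finset.sum_range_succ, Finset.sum_range_succ]
      linear_combination ih

lemma util_eq (N T : ℕ) (D1 c : ℝ) (s : ℕ → ℝ) (p : Fin T → ℝ) :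
    ∑ t : Fin T, (ownDemandFin N T D1 s p t - p t) * (p t - c)
      = ∑ j ∈ Finset.range T,
          ((D1 + ∑ i ∈ Finset.range j, ((1/(N:ℝ) - 1) * Qf T p i + s i / N)) - Qf T p j)
            * (Qf T p j - c) := by
  have h1 : ∀ t : Fin T, (ownDemandFin N T D1 s p t - p t) * (p t - c)
      = (fun j : ℕ => (ownDemandFin N T D1 s p j - Qf T p j) * (Qf T p j - c)) t := by
    intro t
    simp only [Qf, dif_pos t.isLt, Fin.eta]
  rw [Finset.sum_congr rfl (fun t _ => h1 t),
    Fin.sum_univ_eq_sum_range (fun j => (ownDemandFin N T D1 s p j - Qf T p j) * (Qf T p j - c)) T]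
  exact Finset.sum_congr rfl fun j _ => by rw [demand_closed]

/-- The cumulative utility `U_i(p^i) = Σ_t (D_t^i - p_t^i)(p_t^i - c_i)` is
strictly concave in the firm's own price vector. -/
theorem utility_strictly_concave (N T : ℕ) (hN : 1 ≤ N) (hT : 1 ≤ T)
    (D1 c : ℝ) (s : ℕ → ℝ) :
    StrictConcaveOn ℝ Set.univ
      (fun p : Fin T → ℝ =>
        ∑ t : Fin T, (ownDemandFin N T D1 s p t - p t) * (p t - c)) := by
  have hN0 : (0:ℝ) < N := by exact_mod_cast Nat.lt_of_lt_of_le Nat.zero_lt_one hN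
  have hN1 : (1:ℝ) ≤ N := by exact_mod_cast hN
  refine ⟨convex_univ, ?_⟩
  intro x _ y _ hxy a b ha hb hab
  set α : ℝ := 1 - 1/(N:ℝ) with hα
  have hα0 : 0 ≤ α := by
    have : 1/(N:ℝ) ≤ 1 := by
      rw [div_le_one hN0]; exact hN1
    rw [hα]; linarith
  set z : Fin T → ℝ := a • x + b • y with hz
  set d : ℕ → ℝ := fun j => Qf T x j - Qf T y j with hd
  -- Qf of mixture
  have hQz : ∀ j, Qf T z j = a * Qf T x j + b * Qf T y j := by
    intro j
    simp only [Qf, hz]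
    split_ifs with h
    · simp [Pi.add_apply, Pi.smul_apply, smul_eq_mul]
    · ring
  -- inner sums
  have hInner : ∀ j, ∑ i ∈ Finset.range j, ((1/(N:ℝ) - 1) * Qf T z i + s i / N)
      = a * (∑ i ∈ Finset.range j, ((1/(N:ℝ) - 1) * Qf T x i + s i / N))
        + b * (∑ i ∈ Finset.range j, ((1/(N:ℝ) - 1) * Qf T y i + s i / N)) := by
    intro j
    rw [Finset.mul_sum, Finset.mul_sum, ← Finset.sum_add_distrib]
    refine Finset.sum_congr rfl fun i _ => ?_
    rw [hQz i]
    have : b = 1 - a := by linarith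
    rw [this]; ring
  have hdInner : ∀ j, (∑ i ∈ Finset.range j, ((1/(N:ℝ) - 1) * Qf T x i + s i / N))
      - (∑ i ∈ Finset.range j, ((1/(N:ℝ) - 1) * Qf T y i + s i / N))
      = -α * ∑ i ∈ Finset.range j, d i := by
    intro j
    rw [← Finset.sum_sub_distrib, Finset.mul_sum]
    refine Finset.sum_congr rfl fun i _ => ?_
    simp only [hd, hα]; ring
  -- the key identity
  have key : (∑ t : Fin T, (ownDemandFin N T D1 s z t - z t) * (z t - c))
      - (a * (∑ t : Fin T, (ownDemandFin N T D1 s x t - x t) * (x t - c))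
         + b * (∑ t : Fin T, (ownDemandFin N T D1 s y t - y t) * (y t - c)))
      = a * b * (∑ j ∈ Finset.range T, (d j)^2
          + α * ∑ j ∈ Finset.range T, (d j * ∑ i ∈ Finset.range j, d i)) := by
    have rhs : a * b * (∑ j ∈ Finset.range T, (d j)^2
          + α * ∑ j ∈ Finset.range T, (d j * ∑ i ∈ Finset.range j, d i))
        = ∑ j ∈ Finset.range T,
            a * b * ((d j)^2 + α * (d j * ∑ i ∈ Finset.range j, d i)) := by
      rw [Finset.mul_sum, ← Finset.sum_add_distrib, Finset.mul_sum]
    rw [util_eq, util_eq, util_eq, rhs]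
    rw [Finset.mul_sum, Finset.mul_sum, ← Finset.sum_add_distrib, ← Finset.sum_sub_distrib]
    refine Finset.sum_congr rfl fun j _ => ?_
    rw [hQz j, hInner j]
    have hAB := hdInner j
    have hdj : d j = Qf T x j - Qf T y j := rfl
    rw [hdj]
    have hb1 : b = 1 - a := by linarith
    rw [hb1]
    linear_combination (-(a*(1-a)*(Qf T x j - Qf T y j))) * hAB
  -- positivity of the gap
  have hα1 : α ≤ 1 := by
    have : 0 < 1/(N:ℝ) := by positivity
    rw [hα]; linarith
  obtain ⟨t, ht⟩ : ∃ t : Fin T, x t ≠ y t := by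
    by_contra h
    push_neg at h
    exact hxy (funext h)
  have hdt : d (t : ℕ) = x t - y t := by
    simp only [hd, Qf, dif_pos t.isLt, Fin.eta]
  have hS1 : 0 < ∑ j ∈ Finset.range T, (d j)^2 := by
    refine Finset.sum_pos' (fun j _ => sq_nonneg _) ⟨(t : ℕ), Finset.mem_range.2 t.isLt, ?_⟩
    have : d (t : ℕ) ≠ 0 := by rw [hdt]; exact sub_ne_zero_of_ne ht
    positivity
  have hS := sq_sum_range d T
  have hB : 0 < ∑ j ∈ Finset.range T, (d j)^2
      + α * ∑ j ∈ Finset.range T, (d j * ∑ i ∈ Finset.range j, d i) := by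
    nlinarith [sq_nonneg (∑ j ∈ Finset.range T, d j)]
  have hpos := mul_pos (mul_pos ha hb) hB
  simp only [smul_eq_mul]
  linarith [key, hpos]
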